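/- Let G be a finite group and let H, K ∈ CD(G) with H ≺ K, meaning H < K and there is no R ∈ CD(G) with H < R < K. Then H is a normal subgroup of K. -/

import Mathlib

open Pointwise

/-- The Chermak-Delgado measure of a subgroup: `m_G(H) = |H| * |C_G(H)|`. -/
noncomputable def cdMeasure {G : Type*} [Group G] (H : Subgroup G) : Nat :=
  Nat.card H * Nat.card (Subgroup.centralizer (H : Set G))

/-- The Chermak-Delgado lattice of `G`: the subgroups of maximal Chermak-Delgado measure. -/
def CD (G : Type*) [Group G] : Set (Subgroup G) :=
  {H | ∀ K : Subgroup G, cdMeasure K ≤ cdMeasure H}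

section CDaux

variable {G : Type*} [Group G]

lemma CDaux_card_le_of_le [Fintype G] {A B : Subgroup G} (h : A ≤ B) :
    Nat.card A ≤ Nat.card B := by
  simpa using Nat.card_mono (Set.toFinite (B : Set G)) (SetLike.coe_subset_coe.mpr h)

lemma CDaux_cdMeasure_pos [Fintype G] (A : Subgroup G) : 0 < cdMeasure A :=
  Nat.mul_pos Nat.card_pos Nat.card_pos

lemma CDaux_inf_centralizer_le (A B : Subgroup G) :
    Subgroup.centralizer (A : Set G) ⊓ Subgroup.centralizer (B : Set G) ≤
      Subgroup.centralizer ((A ⊔ B : Subgroup G) : Set G) := by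
  rw [← Subgroup.le_centralizer_iff]
  apply sup_le
  · rw [Subgroup.le_centralizer_iff]; exact inf_le_left
  · rw [Subgroup.le_centralizer_iff]; exact inf_le_right

lemma CDaux_centralizer_map (f : G ≃* G) (A : Subgroup G) :
    Subgroup.centralizer ((A.map (f : G →* G) : Subgroup G) : Set G)
      = (Subgroup.centralizer (A : Set G)).map (f : G →* G) := by
  ext g
  simp only [Subgroup.mem_map, Subgroup.mem_centralizer_iff, SetLike.mem_coe]
  constructor
  · intro hg
    refine ⟨f.symm g, fun a ha => ?_, by simp⟩
    have h2 := hg (f a) ⟨a, ha, rfl⟩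
    have h3 := congrArg f.symm h2
    simpa using h3
  · rintro ⟨c, hc, rfl⟩ m hm
    obtain ⟨a, ha, rfl⟩ := hm
    have := hc a ha
    rw [← map_mul, ← map_mul, this]

lemma CDaux_card_map (f : G ≃* G) (A : Subgroup G) :
    Nat.card (A.map (f : G →* G)) = Nat.card A :=
  Nat.card_congr (A.equivMapOfInjective (f : G →* G) f.injective).toEquiv.symm

lemma CDaux_cdMeasure_map (f : G ≃* G) (A : Subgroup G) :
    cdMeasure (A.map (f : G →* G)) = cdMeasure A := by
  unfold cdMeasure
  rw [CDaux_centralizer_map, CDaux_card_map, CDaux_card_map]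

lemma CDaux_card_mul_inf [Fintype G] (A B : Subgroup G) :
    Nat.card ((A : Set G) * (B : Set G) : Set G) * Nat.card (A ⊓ B : Subgroup G)
      = Nat.card A * Nat.card B := by
  classical
  obtain ⟨S, hS, -⟩ := Subgroup.exists_isComplement_right ((A ⊓ B).subgroupOf B) 1
  have hC : Subgroup.IsComplement ((((A ⊓ B).subgroupOf B) : Subgroup B) : Set B) S := hS
  set T : Set G := (Subtype.val : B → G) '' S with hTdef
  have hTB : T ⊆ (B : Set G) := by rintro _ ⟨s, _, rfl⟩; exact s.2
  have hset : (A : Set G) * (B : Set G) = (A : Set G) * T := by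
    apply Set.Subset.antisymm
    · rintro _ ⟨a, ha, b, hb, rfl⟩
      obtain ⟨⟨⟨d, hd⟩, ⟨s, hs⟩⟩, hprod, -⟩ := hC.existsUnique (⟨b, hb⟩ : B)
      have hb' : b = (d : G) * (s : G) := by
        have := congrArg (Subtype.val : B → G) hprod
        simpa using this.symm
      have hdA : (d : G) ∈ A :=
        (Subgroup.mem_subgroupOf.mp (SetLike.mem_coe.mp hd)).1
      refine ⟨a * d, A.mul_mem ha hdA, (s : G), ⟨s, hs, rfl⟩, ?_⟩
      show (a * ↑d) * ↑s = a * b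
      rw [hb', mul_assoc]
    · exact Set.mul_subset_mul_left hTB
  have hinj : Set.InjOn (fun p : G × G => p.1 * p.2) ((A : Set G) ×ˢ T) := by
    rintro ⟨a, t⟩ ⟨ha, ht⟩ ⟨a', t'⟩ ⟨ha', ht'⟩ heq
    obtain ⟨s, hs, rfl⟩ := ht
    obtain ⟨s', hs', rfl⟩ := ht'
    simp only at heq ha ha'
    have h1 : (s' : G) * (s : G)⁻¹ = a'⁻¹ * a := by
      have h0 : a'⁻¹ * (a * ↑s) * (↑s)⁻¹ = a'⁻¹ * (a' * ↑s') * (↑s)⁻¹ := by rw [heq]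
      simpa [mul_assoc] using h0.symm
    have hdmem : (s' * s⁻¹ : B) ∈ (A ⊓ B).subgroupOf B := by
      rw [Subgroup.mem_subgroupOf]
      refine Subgroup.mem_inf.mpr ⟨?_, ?_⟩
      · show ((s' * s⁻¹ : B) : G) ∈ A
        push_cast
        rw [h1]
        exact A.mul_mem (A.inv_mem ha') ha
      · exact (s' * s⁻¹ : B).2
    have key := hC.1 (a₁ := ⟨⟨s' * s⁻¹, hdmem⟩, ⟨s, hs⟩⟩)
      (a₂ := ⟨⟨1, (((A ⊓ B).subgroupOf B)).one_mem⟩, ⟨s', hs'⟩⟩) (by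
        show (s' * s⁻¹ : B) * s = 1 * s'
        group)
    have hss : s = s' := by
      have := congrArg (fun x => ((x.2 : ↥S) : B)) key
      simpa using this
    subst hss
    have haa : a = a' := by
      have : a * (s : G) = a' * (s : G) := heq
      exact mul_right_cancel this
    simp [haa]
  have hcardT : Nat.card T = Nat.card S :=
    Nat.card_image_of_injOn Subtype.val_injective.injOn
  have hcardAT : Nat.card ((A : Set G) * T : Set G) = Nat.card A * Nat.card T := by
    rw [← Set.image_mul_prod, Nat.card_image_of_injOn hinj,
      Nat.card_congr (Equiv.Set.prod _ _), Nat.card_prod]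
    simp
  have hcomp := hC.card_mul_card
  have hcardsub : Nat.card ((A ⊓ B).subgroupOf B) = Nat.card (A ⊓ B : Subgroup G) :=
    Nat.card_congr (Subgroup.subgroupOfEquivOfLe inf_le_right).toEquiv
  rw [hset, hcardAT, hcardT]
  have : Nat.card ((A ⊓ B).subgroupOf B) * Nat.card S = Nat.card B := by
    simpa using hcomp
  calc Nat.card A * Nat.card S * Nat.card (A ⊓ B : Subgroup G)
      = Nat.card A * (Nat.card ((A ⊓ B).subgroupOf B) * Nat.card S) := by
        rw [hcardsub]; ring
    _ = Nat.card A * Nat.card B := by rw [this]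

end CDaux

theorem stmt4 {G : Type*} [Group G] [Fintype G] (H K : Subgroup G)
    (hH : H ∈ CD G) (hK : K ∈ CD G) (hlt : H < K)
    (hcov : ¬ ∃ R ∈ CD G, H < R ∧ R < K) :
    ∀ k ∈ K, ∀ h ∈ H, k * h * k⁻¹ ∈ H := by
  intro k hk h hh
  set f : G ≃* G := MulAut.conj k with hfdef
  set B : Subgroup G := H.map (f : G →* G) with hBdef
  have hBle : B ≤ H := by
    by_contra hnle
    set D : Subgroup G := H ⊓ B with hDdef
    set J : Subgroup G := H ⊔ B with hJdef
    set P : Set G := (H : Set G) * (B : Set G) with hPdef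
    have hBK : B ≤ K := by
      rintro _ ⟨a, ha, rfl⟩
      show (f : G →* G) a ∈ K
      have : (f : G →* G) a = k * a * k⁻¹ := rfl
      rw [this]
      exact K.mul_mem (K.mul_mem hk (hlt.le ha)) (K.inv_mem hk)
    have hmB : cdMeasure B = cdMeasure H := CDaux_cdMeasure_map f H
    set m : ℕ := cdMeasure H with hmdef
    have hmpos : 0 < m := CDaux_cdMeasure_pos H
    -- abbreviations for cards
    set CH := Subgroup.centralizer (H : Set G) with hCH
    set CB := Subgroup.centralizer (B : Set G) with hCBdef
    set CD' := Subgroup.centralizer (D : Set G) with hCDdef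
    set CJ := Subgroup.centralizer (J : Set G) with hCJdef
    have e1 : Nat.card P * Nat.card D = Nat.card H * Nat.card B := CDaux_card_mul_inf H B
    have hPsub : P ⊆ (J : Set G) := by
      rintro _ ⟨a, ha, b, hb, rfl⟩
      exact mul_mem (Subgroup.mem_sup_left ha) (Subgroup.mem_sup_right hb)
    have e2 : Nat.card P ≤ Nat.card J := by
      have := Nat.card_mono (Set.toFinite (J : Set G)) hPsub
      simpa using this
    have e3 : Nat.card ((CH : Set G) * (CB : Set G) : Set G) * Nat.card (CH ⊓ CB : Subgroup G)
        = Nat.card CH * Nat.card CB := CDaux_card_mul_inf CH CB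
    have e4 : Nat.card ((CH : Set G) * (CB : Set G) : Set G) ≤ Nat.card CD' := by
      have hle1 : CH ≤ CD' := Subgroup.centralizer_le (SetLike.coe_subset_coe.mpr inf_le_left)
      have hle2 : CB ≤ CD' := Subgroup.centralizer_le (SetLike.coe_subset_coe.mpr inf_le_right)
      have hsub : (CH : Set G) * (CB : Set G) ⊆ (CD' : Set G) := by
        rintro _ ⟨c, hc, c', hc', rfl⟩
        exact mul_mem (hle1 hc) (hle2 hc')
      have := Nat.card_mono (Set.toFinite (CD' : Set G)) hsub
      simpa using this
    have e5 : Nat.card (CH ⊓ CB : Subgroup G) ≤ Nat.card CJ :=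
      CDaux_card_le_of_le (CDaux_inf_centralizer_le H B)
    -- the chain inequality
    have hchain : m * m ≤ cdMeasure J * cdMeasure D := by
      have lhs : m * m = (Nat.card P * Nat.card D) *
          (Nat.card ((CH : Set G) * (CB : Set G) : Set G) * Nat.card (CH ⊓ CB : Subgroup G)) := by
        rw [e1, e3]
        have h1 : m * m = cdMeasure H * cdMeasure B := by rw [hmB, hmdef]
        rw [h1]
        unfold cdMeasure
        ring
      rw [lhs]
      have rhs : cdMeasure J * cdMeasure D =
          (Nat.card J * Nat.card D) * (Nat.card CD' * Nat.card CJ) := by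
        unfold cdMeasure; ring
      rw [rhs]
      have := Nat.mul_le_mul (Nat.mul_le_mul e2 (le_refl (Nat.card D)))
        (Nat.mul_le_mul e4 e5)
      exact this
    have hJm : cdMeasure J = m := by
      have h1 : m * m ≤ cdMeasure J * m :=
        hchain.trans (Nat.mul_le_mul (le_refl _) (hH D))
      have h2 : m ≤ cdMeasure J := Nat.le_of_mul_le_mul_right h1 hmpos
      exact le_antisymm (hH J) h2
    have hDm : cdMeasure D = m := by
      have h1 : m * m ≤ m * cdMeasure D := by
        calc m * m ≤ cdMeasure J * cdMeasure D := hchain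
          _ ≤ m * cdMeasure D := Nat.mul_le_mul (hH J) (le_refl _)
      have h2 : m ≤ cdMeasure D := Nat.le_of_mul_le_mul_left h1 hmpos
      exact le_antisymm (hH D) h2
    -- covering gives J = K
    have hJCD : J ∈ CD G := fun R => (hH R).trans hJm.ge
    have hHJ : H < J := by
      refine lt_of_le_of_ne le_sup_left (fun e => hnle ?_)
      have hBJ : B ≤ J := le_sup_right
      rw [← e] at hBJ
      exact hBJ
    have hJK : J ≤ K := sup_le hlt.le hBK
    have hJeqK : J = K := by
      by_contra hne
      exact hcov ⟨J, hJCD, hHJ, lt_of_le_of_ne hJK hne⟩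
    -- equality extraction: Nat.card P = Nat.card J
    have hqe_pos : 0 < Nat.card ((CH : Set G) * (CB : Set G) : Set G)
        * Nat.card (CH ⊓ CB : Subgroup G) := by
      rw [e3]; exact Nat.mul_pos Nat.card_pos Nat.card_pos
    have hmm1 : (Nat.card P * Nat.card D) *
        (Nat.card ((CH : Set G) * (CB : Set G) : Set G) * Nat.card (CH ⊓ CB : Subgroup G))
          = m * m := by
      rw [e1, e3]
      have h1 : m * m = cdMeasure H * cdMeasure B := by rw [hmB, hmdef]
      rw [h1]
      unfold cdMeasure
      ring
    have hmm2 : (Nat.card J * Nat.card D) *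
        (Nat.card ((CH : Set G) * (CB : Set G) : Set G) * Nat.card (CH ⊓ CB : Subgroup G))
          ≤ m * m := by
      calc (Nat.card J * Nat.card D) *
          (Nat.card ((CH : Set G) * (CB : Set G) : Set G) * Nat.card (CH ⊓ CB : Subgroup G))
          ≤ (Nat.card J * Nat.card D) * (Nat.card CD' * Nat.card CJ) :=
            Nat.mul_le_mul (le_refl _) (Nat.mul_le_mul e4 e5)
        _ = cdMeasure J * cdMeasure D := by unfold cdMeasure; ring
        _ = m * m := by rw [hJm, hDm]
    have hPJ : Nat.card P = Nat.card J := by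
      have hle : Nat.card P * Nat.card D ≤ Nat.card J * Nat.card D :=
        Nat.mul_le_mul e2 (le_refl _)
      have heq : Nat.card P * Nat.card D = Nat.card J * Nat.card D := by
        have := hmm2.trans hmm1.ge
        exact le_antisymm hle (Nat.le_of_mul_le_mul_right
          (by rw [hmm1] at *; exact this) hqe_pos)
      exact Nat.eq_of_mul_eq_mul_right Nat.card_pos heq
    -- set equality P = K
    have hPK : P = (K : Set G) := by
      have hsub : P ⊆ (K : Set G) := by rw [← hJeqK]; exact hPsub
      refine Set.eq_of_subset_of_ncard_le hsub ?_ (Set.toFinite _)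
      rw [← Nat.card_coe_set_eq, ← Nat.card_coe_set_eq]
      have : Nat.card (K : Set G) = Nat.card J := by
        rw [hJeqK]; simp
      rw [this, hPJ]
    -- finale: k ∈ H, contradiction
    have hkinv : k⁻¹ ∈ P := by rw [hPK]; exact SetLike.mem_coe.mpr (K.inv_mem hk)
    obtain ⟨u, hu, w, hw, huw⟩ := hkinv
    obtain ⟨v, hv, rfl⟩ := hw
    have hfv : (f : G →* G) v = k * v * k⁻¹ := rfl
    have hkH : k ∈ H := by
      have h1 : u * (k * v * k⁻¹) = k⁻¹ := by rw [← hfv]; exact huw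
      have h2 : k = u⁻¹ * v⁻¹ := by
        have h3 : u * (k * v) = 1 := by
          have := congrArg (fun x : G => x * k) h1
          simpa [mul_assoc] using this
        have h4 : k * v = u⁻¹ := eq_inv_of_mul_eq_one_right h3
        exact eq_mul_inv_of_mul_eq h4
      rw [h2]
      exact H.mul_mem (H.inv_mem hu) (H.inv_mem hv)
    refine hnle ?_
    rintro _ ⟨a, ha, rfl⟩
    have : (f : G →* G) a = k * a * k⁻¹ := rfl
    rw [this]
    exact H.mul_mem (H.mul_mem hkH ha) (H.inv_mem hkH)
  exact hBle ⟨h, hh, rfl⟩
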